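/- Let V be a finite-dimensional real inner product space and let B: ℝ → End(V ⊕ V) be continuous of the special form B(s)(x,y) = (B₁(s)x + B₂(s)y, B₂(s)x + B₁(s)y) with B₁, B₂ continuous, equal to constant symmetric operators B₁^±, B₂^± for ±s ≥ T. Let E(x,y) = (−x,y) and let η₁ = sup_s ‖B₁(s)‖ + sup_s ‖B₂(s)‖. If η > η₁, then the only solution v ∈ W^{1,2}(ℝ; V ⊕ V) of dv/ds + (ηE + B(s))v(s) = 0 is v = 0. -/

import Mathlib

open MeasureTheory

set_option maxHeartbeats 2000000 in
/-- Let `V` be a finite-dimensional real inner product space, `E(x,y) = (−x,y)` on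
`V ⊕ V`, and let `B(s)(x,y) = (B₁(s)x + B₂(s)y, B₂(s)x + B₁(s)y)` with `B₁, B₂`
continuous families of operators on `V`, equal to constant symmetric operators
`B₁^±, B₂^±` for `±s ≥ T`.  Let `η₁ = sup_s ‖B₁(s)‖ + sup_s ‖B₂(s)‖`.  If `η > η₁`,
then the only solution `v ∈ W^{1,2}(ℝ; V ⊕ V)` (square-integrable, differentiable, with
square-integrable derivative) of `dv/ds + (ηE + B(s))v(s) = 0` is `v = 0`. -/
theorem sobolev_solution_vanishes_of_large_eta
    {V : Type*} [NormedAddCommGroup V] [InnerProductSpace ℝ V] [FiniteDimensional ℝ V]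
    (B₁ B₂ : ℝ → (V →L[ℝ] V)) (hB₁c : Continuous B₁) (hB₂c : Continuous B₂)
    (T : ℝ) (hT : 0 < T) (B₁p B₂p B₁m B₂m : V →L[ℝ] V)
    (hB₁p : IsSelfAdjoint B₁p) (hB₂p : IsSelfAdjoint B₂p)
    (hB₁m : IsSelfAdjoint B₁m) (hB₂m : IsSelfAdjoint B₂m)
    (hplus : ∀ s : ℝ, T ≤ s → B₁ s = B₁p ∧ B₂ s = B₂p)
    (hminus : ∀ s : ℝ, s ≤ -T → B₁ s = B₁m ∧ B₂ s = B₂m)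
    (η : ℝ)
    (hη : sSup (Set.range fun s => ‖B₁ s‖) + sSup (Set.range fun s => ‖B₂ s‖) < η)
    (v : ℝ → V × V) (hv : Differentiable ℝ v)
    (heq : ∀ s : ℝ,
      deriv v s +
        (η • ((-(ContinuousLinearMap.id ℝ V)).prodMap (ContinuousLinearMap.id ℝ V)) +
          ContinuousLinearMap.prod
            ((B₁ s).comp (ContinuousLinearMap.fst ℝ V V) +
              (B₂ s).comp (ContinuousLinearMap.snd ℝ V V))
            ((B₂ s).comp (ContinuousLinearMap.fst ℝ V V) +
              (B₁ s).comp (ContinuousLinearMap.snd ℝ V V))) (v s) = 0)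
    (hL2 : MemLp v 2 volume) (hL2' : MemLp (deriv v) 2 volume) :
    v = 0 := by
  set a := sSup (Set.range fun s => ‖B₁ s‖) with ha
  set b := sSup (Set.range fun s => ‖B₂ s‖) with hb
  -- boundedness of the families
  have hbdd : ∀ (B : ℝ → (V →L[ℝ] V)), Continuous B →
      (∀ s, T ≤ s → B s = B T) → (∀ s, s ≤ -T → B s = B (-T)) →
      BddAbove (Set.range fun s => ‖B s‖) := by
    intro B hBc hp hm
    have hsub : (Set.range fun s => ‖B s‖) ⊆ (fun s => ‖B s‖) '' Set.Icc (-T) T := by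
      rintro _ ⟨s, rfl⟩
      rcases le_total s T with h1 | h1
      · rcases le_total (-T) s with h2 | h2
        · exact Set.mem_image_of_mem _ ⟨h2, h1⟩
        · exact ⟨-T, ⟨le_refl _, by linarith⟩, by show ‖B (-T)‖ = ‖B s‖; rw [hm s h2]⟩
      · exact ⟨T, ⟨by linarith, le_refl _⟩, by show ‖B T‖ = ‖B s‖; rw [hp s h1]⟩
    exact ((isCompact_Icc.image (hBc.norm)).bddAbove).mono hsub
  have hp1 : ∀ s, T ≤ s → B₁ s = B₁ T := fun s hs => by
    rw [(hplus s hs).1, (hplus T le_rfl).1]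
  have hm1 : ∀ s, s ≤ -T → B₁ s = B₁ (-T) := fun s hs => by
    rw [(hminus s hs).1, (hminus (-T) le_rfl).1]
  have hp2 : ∀ s, T ≤ s → B₂ s = B₂ T := fun s hs => by
    rw [(hplus s hs).2, (hplus T le_rfl).2]
  have hm2 : ∀ s, s ≤ -T → B₂ s = B₂ (-T) := fun s hs => by
    rw [(hminus s hs).2, (hminus (-T) le_rfl).2]
  have hba : ∀ s, ‖B₁ s‖ ≤ a := fun s =>
    le_csSup (hbdd B₁ hB₁c hp1 hm1) ⟨s, rfl⟩
  have hbb : ∀ s, ‖B₂ s‖ ≤ b := fun s =>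
    le_csSup (hbdd B₂ hB₂c hp2 hm2) ⟨s, rfl⟩
  -- componentwise ODE
  set x : ℝ → V := fun t => (v t).1 with hxdef
  set y : ℝ → V := fun t => (v t).2 with hydef
  have hderiv : ∀ s, deriv v s =
      (η • x s - (B₁ s (x s) + B₂ s (y s)), -(η • y s) - (B₂ s (x s) + B₁ s (y s))) := by
    intro s
    have h := eq_neg_of_add_eq_zero_left (heq s)
    rw [h]
    refine Prod.ext ?_ ?_ <;>
      simp [ContinuousLinearMap.prod_apply,
        ContinuousLinearMap.add_apply, ContinuousLinearMap.comp_apply,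
        ContinuousLinearMap.smul_apply, ContinuousLinearMap.neg_apply,
        Prod.fst_add, Prod.snd_add, smul_neg, hxdef, hydef] <;>
      abel
  have hx' : ∀ s, HasDerivAt x (η • x s - (B₁ s (x s) + B₂ s (y s))) s := by
    intro s
    have := (ContinuousLinearMap.fst ℝ V V).hasFDerivAt.comp_hasDerivAt s (hv s).hasDerivAt
    simpa [hderiv s, hxdef, Function.comp_def] using this
  have hy' : ∀ s, HasDerivAt y (-(η • y s) - (B₂ s (x s) + B₁ s (y s))) s := by
    intro s
    have := (ContinuousLinearMap.snd ℝ V V).hasFDerivAt.comp_hasDerivAt s (hv s).hasDerivAt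
    simpa [hderiv s, hydef, Function.comp_def] using this
  -- the function f
  set f : ℝ → ℝ := fun s => inner ℝ (x s) (x s) - inner ℝ (y s) (y s) with hfdef
  have hf' : ∀ s, HasDerivAt f
      ((inner ℝ (x s) (η • x s - (B₁ s (x s) + B₂ s (y s))) +
        inner ℝ (η • x s - (B₁ s (x s) + B₂ s (y s))) (x s)) -
       (inner ℝ (y s) (-(η • y s) - (B₂ s (x s) + B₁ s (y s))) +
        inner ℝ (-(η • y s) - (B₂ s (x s) + B₁ s (y s))) (y s))) s := by
    intro s
    exact ((hx' s).inner ℝ (hx' s)).sub ((hy' s).inner ℝ (hy' s))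
  -- key lower bound on the derivative
  have hkey : ∀ s, 2 * (η - (a + b)) * (‖x s‖ ^ 2 + ‖y s‖ ^ 2) ≤ deriv f s := by
    intro s
    rw [(hf' s).deriv]
    have e1 : |(inner ℝ (B₁ s (x s)) (x s) : ℝ)| ≤ a * (‖x s‖ * ‖x s‖) := by
      calc |(inner ℝ (B₁ s (x s)) (x s) : ℝ)| ≤ ‖B₁ s (x s)‖ * ‖x s‖ := abs_real_inner_le_norm _ _
        _ ≤ (‖B₁ s‖ * ‖x s‖) * ‖x s‖ := by
            gcongr; exact (B₁ s).le_opNorm _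
        _ ≤ a * (‖x s‖ * ‖x s‖) := by
            rw [mul_assoc]
            exact mul_le_mul_of_nonneg_right (hba s) (by positivity)
    have e2 : |(inner ℝ (B₂ s (y s)) (x s) : ℝ)| ≤ b * (‖y s‖ * ‖x s‖) := by
      calc |(inner ℝ (B₂ s (y s)) (x s) : ℝ)| ≤ ‖B₂ s (y s)‖ * ‖x s‖ := abs_real_inner_le_norm _ _
        _ ≤ (‖B₂ s‖ * ‖y s‖) * ‖x s‖ := by gcongr; exact (B₂ s).le_opNorm _
        _ ≤ b * (‖y s‖ * ‖x s‖) := by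
            rw [mul_assoc]
            exact mul_le_mul_of_nonneg_right (hbb s) (by positivity)
    have e3 : |(inner ℝ (B₂ s (x s)) (y s) : ℝ)| ≤ b * (‖x s‖ * ‖y s‖) := by
      calc |(inner ℝ (B₂ s (x s)) (y s) : ℝ)| ≤ ‖B₂ s (x s)‖ * ‖y s‖ := abs_real_inner_le_norm _ _
        _ ≤ (‖B₂ s‖ * ‖x s‖) * ‖y s‖ := by gcongr; exact (B₂ s).le_opNorm _
        _ ≤ b * (‖x s‖ * ‖y s‖) := by
            rw [mul_assoc]
            exact mul_le_mul_of_nonneg_right (hbb s) (by positivity)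
    have e4 : |(inner ℝ (B₁ s (y s)) (y s) : ℝ)| ≤ a * (‖y s‖ * ‖y s‖) := by
      calc |(inner ℝ (B₁ s (y s)) (y s) : ℝ)| ≤ ‖B₁ s (y s)‖ * ‖y s‖ := abs_real_inner_le_norm _ _
        _ ≤ (‖B₁ s‖ * ‖y s‖) * ‖y s‖ := by gcongr; exact (B₁ s).le_opNorm _
        _ ≤ a * (‖y s‖ * ‖y s‖) := by
            rw [mul_assoc]
            exact mul_le_mul_of_nonneg_right (hba s) (by positivity)
    have hxx : (inner ℝ (x s) (x s) : ℝ) = ‖x s‖ ^ 2 := real_inner_self_eq_norm_sq _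
    have hyy : (inner ℝ (y s) (y s) : ℝ) = ‖y s‖ ^ 2 := real_inner_self_eq_norm_sq _
    have hform : (inner ℝ (x s) (η • x s - (B₁ s (x s) + B₂ s (y s))) +
        inner ℝ (η • x s - (B₁ s (x s) + B₂ s (y s))) (x s)) -
       ((inner ℝ (y s) (-(η • y s) - (B₂ s (x s) + B₁ s (y s))) : ℝ) +
        inner ℝ (-(η • y s) - (B₂ s (x s) + B₁ s (y s))) (y s)) =
        2 * η * (‖x s‖ ^ 2 + ‖y s‖ ^ 2)
          - 2 * inner ℝ (B₁ s (x s)) (x s) - 2 * inner ℝ (B₂ s (y s)) (x s)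
          + 2 * inner ℝ (B₂ s (x s)) (y s) + 2 * inner ℝ (B₁ s (y s)) (y s) := by
      simp only [inner_sub_right, inner_sub_left, inner_add_right, inner_add_left,
        real_inner_smul_right, real_inner_smul_left, inner_neg_right, inner_neg_left,
        real_inner_comm (x s) (B₁ s (x s)),
        real_inner_comm (x s) (B₂ s (y s)), real_inner_comm (y s) (B₂ s (x s)),
        real_inner_comm (y s) (B₁ s (y s)), hxx, hyy]
      ring
    rw [hform]
    have e5 := abs_le.mp e1
    have e6 := abs_le.mp e2
    have e7 := abs_le.mp e3
    have e8 := abs_le.mp e4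
    have h0b : (0:ℝ) ≤ b := le_trans (norm_nonneg (B₂ s)) (hbb s)
    nlinarith [mul_nonneg h0b (sq_nonneg (‖x s‖ - ‖y s‖)),
      mul_nonneg h0b (sq_nonneg (‖x s‖ + ‖y s‖))]
  have hab : 0 ≤ η - (a + b) := by
    have h0a : (0:ℝ) ≤ a := le_trans (norm_nonneg (B₁ 0)) (hba 0)
    have h0b : (0:ℝ) ≤ b := le_trans (norm_nonneg (B₂ 0)) (hbb 0)
    linarith
  have hdf : Differentiable ℝ f := fun s => (hf' s).differentiableAt
  have hmono : Monotone f := by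
    apply monotone_of_deriv_nonneg hdf
    intro s
    refine le_trans ?_ (hkey s)
    positivity
  -- integrability of f
  have hI2 : Integrable (fun s => ‖v s‖ ^ 2) volume := by
    have h := hL2.norm_rpow (by norm_num) (by norm_num)
    rw [memLp_one_iff_integrable] at h
    have : (fun s => ‖v s‖ ^ (2:ENNReal).toReal) = fun s => ‖v s‖ ^ 2 := by
      funext s
      rw [ENNReal.toReal_ofNat, Real.rpow_two]
    rwa [this] at h
  have hIf : Integrable f volume := by
    refine (hI2.const_mul 2).mono (hdf.continuous.aestronglyMeasurable) ?_
    filter_upwards with s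
    have h1 : ‖x s‖ ≤ ‖v s‖ := norm_fst_le (v s)
    have h2 : ‖y s‖ ≤ ‖v s‖ := norm_snd_le (v s)
    have hxx : (inner ℝ (x s) (x s) : ℝ) = ‖x s‖ ^ 2 := real_inner_self_eq_norm_sq _
    have hyy : (inner ℝ (y s) (y s) : ℝ) = ‖y s‖ ^ 2 := real_inner_self_eq_norm_sq _
    simp only [hfdef, Real.norm_eq_abs, hxx, hyy]
    rw [abs_of_nonneg (by positivity : (0:ℝ) ≤ 2 * ‖v s‖ ^ 2)]
    rw [abs_sub_le_iff]
    constructor <;> nlinarith [norm_nonneg (x s), norm_nonneg (y s), norm_nonneg (v s)]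
  set C := ∫ t, |f t| with hC
  have hIabs : Integrable (fun t => |f t|) volume := hIf.abs
  have habs_nonneg : (0 : ℝ → ℝ) ≤ᶠ[ae volume] fun t => |f t| :=
    Filter.Eventually.of_forall fun t => abs_nonneg _
  -- f ≤ 0 everywhere
  have hC0 : 0 ≤ C := integral_nonneg fun t => abs_nonneg _
  have hfle : ∀ s, f s ≤ 0 := by
    intro s
    by_contra h
    push_neg at h
    have key : ∀ X, s < X → (X - s) * f s ≤ C := by
      intro X hXs
      calc (X - s) * f s = ∫ _ in Set.Ioc s X, f s := by
            rw [setIntegral_const]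
            simp [Real.volume_Ioc, ENNReal.toReal_ofReal (by linarith : (0:ℝ) ≤ X - s), hXs.le]
        _ ≤ ∫ t in Set.Ioc s X, f t := by
            apply setIntegral_mono_on (integrableOn_const (hs := measure_Ioc_lt_top.ne))
              (hIf.integrableOn) measurableSet_Ioc
            intro t ht
            exact hmono ht.1.le
        _ ≤ ∫ t in Set.Ioc s X, |f t| := by
            apply setIntegral_mono_on hIf.integrableOn hIabs.integrableOn measurableSet_Ioc
            intro t _
            exact le_abs_self _
        _ ≤ C := setIntegral_le_integral hIabs habs_nonneg
    have hXs : s < s + (C + 1) / f s := by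
      have : 0 < (C + 1) / f s := div_pos (by linarith) h
      linarith
    have key2 := key _ hXs
    rw [add_sub_cancel_left, div_mul_cancel₀ _ (ne_of_gt h)] at key2
    linarith
  -- 0 ≤ f everywhere
  have hfge : ∀ s, 0 ≤ f s := by
    intro s
    by_contra h
    push_neg at h
    have key : ∀ X, X < s → -C ≤ (s - X) * f s := by
      intro X hXs
      calc (s - X) * f s = ∫ _ in Set.Ioc X s, f s := by
            rw [setIntegral_const]
            simp [Real.volume_Ioc, ENNReal.toReal_ofReal (by linarith : (0:ℝ) ≤ s - X), hXs.le]
        _ ≥ ∫ t in Set.Ioc X s, f t := by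
            apply setIntegral_mono_on (hIf.integrableOn)
              (integrableOn_const (hs := measure_Ioc_lt_top.ne)) measurableSet_Ioc
            intro t ht
            exact hmono ht.2
        _ ≥ ∫ t in Set.Ioc X s, -|f t| := by
            apply setIntegral_mono_on (hIabs.integrableOn.neg) hIf.integrableOn measurableSet_Ioc
            intro t _
            exact neg_abs_le _
        _ = -∫ t in Set.Ioc X s, |f t| := by rw [integral_neg]
        _ ≥ -C := by
            apply neg_le_neg
            exact setIntegral_le_integral hIabs habs_nonneg
    have hXs : s + (C + 1) / f s < s := by
      have : (C + 1) / f s < 0 := div_neg_of_pos_of_neg (by linarith) h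
      linarith
    have key2 := key _ hXs
    rw [sub_add_cancel_left, neg_mul, div_mul_cancel₀ _ (ne_of_lt h)] at key2
    linarith
  have hf0 : f = fun _ => (0:ℝ) := funext fun s => le_antisymm (hfle s) (hfge s)
  have hdf0 : ∀ s, deriv f s = 0 := by
    intro s
    rw [hf0]
    exact deriv_const s 0
  have hηab : 0 < η - (a + b) := by linarith [hab, hη]
  funext s
  have h := hkey s
  rw [hdf0 s] at h
  have hx0 : ‖x s‖ ^ 2 + ‖y s‖ ^ 2 ≤ 0 := by
    by_contra hc
    push_neg at hc
    nlinarith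
  have hx : x s = 0 := by
    have : ‖x s‖ = 0 := by nlinarith [sq_nonneg ‖x s‖, sq_nonneg ‖y s‖, norm_nonneg (x s), norm_nonneg (y s)]
    simpa using this
  have hy : y s = 0 := by
    have : ‖y s‖ = 0 := by nlinarith [sq_nonneg ‖x s‖, sq_nonneg ‖y s‖, norm_nonneg (x s), norm_nonneg (y s)]
    simpa using this
  show v s = 0
  have : v s = (x s, y s) := rfl
  rw [this, hx, hy]
  rfl
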